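/- Let B be a convex body in a Banach space X. Then B is strictly convex if and only if for every z ∈ int B the function f = (1/2)p_z², where p_z is the Minkowski functional of B - z, is a strictly convex function; and this holds if and only if there exists some z ∈ int B for which (1/2)p_z² is strictly convex. -/

import Mathlib

open Set Filter Metric Topology
open Pointwise

section aux

variable {X : Type*} [NormedAddCommGroup X] [NormedSpace ℝ X]
    {B : Set X} {z : X}

lemma gauge_sq_aux_image_eq (z : X) (B : Set X) :
    (fun b => b - z) '' B = (fun x => x + z) ⁻¹' B := by
  ext x
  constructor
  · rintro ⟨b, hb, rfl⟩; simpa using hb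
  · intro hx; exact ⟨x + z, hx, by simp⟩

lemma gauge_sq_aux_facts (hBbd : Bornology.IsBounded B) (hBclosed : IsClosed B)
    (hBconv : Convex ℝ B) (hz : z ∈ interior B) :
    Convex ℝ ((fun x : X => x + z) ⁻¹' B) ∧
    ((fun x : X => x + z) ⁻¹' B) ∈ 𝓝 (0 : X) ∧
    IsClosed ((fun x : X => x + z) ⁻¹' B) ∧
    Bornology.IsVonNBounded ℝ ((fun x : X => x + z) ⁻¹' B) := by
  set C := (fun x : X => x + z) ⁻¹' B with hC
  have hhomeo : C = (Homeomorph.addRight z) ⁻¹' B := rfl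
  have hint : interior C = (fun x : X => x + z) ⁻¹' interior B := by
    rw [hhomeo, ← (Homeomorph.addRight z).preimage_interior]; rfl
  refine ⟨?_, ?_, ?_, ?_⟩
  · intro a ha b hb s t hs ht hst
    simp only [mem_preimage, hC] at ha hb ⊢
    have hmem := hBconv ha hb hs ht hst
    have hz1 : s • z + t • z = z := by rw [← add_smul, hst, one_smul]
    convert hmem using 1
    conv_lhs => rw [← hz1]
    rw [smul_add, smul_add]
    abel
  · rw [_root_.mem_nhds_iff]
    exact ⟨interior C, interior_subset, isOpen_interior, by simp [hint, hz]⟩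
  · exact hBclosed.preimage (by continuity)
  · have : C = B - {z} := by
      rw [Set.sub_singleton, gauge_sq_aux_image_eq]
    rw [this]
    exact NormedSpace.isVonNBounded_of_isBounded ℝ (hBbd.sub Bornology.isBounded_singleton)

end aux

section main

variable {X : Type*} [NormedAddCommGroup X] [NormedSpace ℝ X]
    {B : Set X} {z : X}

/-- Forward direction: strict convexity of the body implies strict convexity of `gauge²/2`. -/
lemma strict_body_to_gauge (hBbd : Bornology.IsBounded B) (hBclosed : IsClosed B)
    (hBconv : Convex ℝ B)
    (hext : ∀ x ∈ frontier B, x ∈ Set.extremePoints ℝ B) (hz : z ∈ interior B) :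
    StrictConvexOn ℝ univ (fun x => gauge ((fun b => b - z) '' B) x ^ 2 / 2) := by
  rw [gauge_sq_aux_image_eq]
  set C := (fun x : X => x + z) ⁻¹' B with hCdef
  obtain ⟨hCconv, hC0, hCclosed, hCbd⟩ := gauge_sq_aux_facts hBbd hBclosed hBconv hz
  have habs : Absorbent ℝ C := absorbent_nhds_zero hC0
  have hfrontier : frontier C = (fun x : X => x + z) ⁻¹' frontier B := by
    have : C = (Homeomorph.addRight z) ⁻¹' B := rfl
    rw [this, ← (Homeomorph.addRight z).preimage_frontier]; rfl
  refine ⟨convex_univ, ?_⟩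
  intro x _ y _ hxy a b ha hb hab
  have key : gauge C (a • x + b • y) ≤ a * gauge C x + b * gauge C y := by
    calc gauge C (a • x + b • y) ≤ gauge C (a • x) + gauge C (b • y) :=
          gauge_add_le hCconv habs _ _
    _ = a * gauge C x + b * gauge C y := by
        rw [gauge_smul_of_nonneg ha.le, gauge_smul_of_nonneg hb.le, smul_eq_mul, smul_eq_mul]
  have hpx : 0 ≤ gauge C x := gauge_nonneg _
  have hpy : 0 ≤ gauge C y := gauge_nonneg _
  simp only [smul_eq_mul]
  by_cases hne : gauge C x = gauge C y
  · -- equal gauges case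
    have hr0 : 0 < gauge C x := by
      rcases hpx.lt_or_eq with h | h
      · exact h
      · exfalso
        have hx0 : x = 0 := (gauge_eq_zero habs hCbd).1 h.symm
        have hy0 : y = 0 := (gauge_eq_zero habs hCbd).1 (by rw [← hne]; exact h.symm)
        exact hxy (hx0.trans hy0.symm)
    have key' : gauge C (a • x + b • y) ≤ gauge C x := by
      calc gauge C (a • x + b • y) ≤ a * gauge C x + b * gauge C y := key
      _ = gauge C x := by rw [← hne, ← add_mul, hab, one_mul]
    have hlt : gauge C (a • x + b • y) < gauge C x := by
      rcases key'.lt_or_eq with h | h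
      · exact h
      · -- gauge of midpoint equals gauge C x : contradiction with extreme point
        exfalso
        set u := (gauge C x)⁻¹ • x with hu
        set v := (gauge C x)⁻¹ • y with hv
        have hpu : gauge C u = 1 := by
          rw [hu, gauge_smul_of_nonneg (inv_nonneg.2 hr0.le), smul_eq_mul,
            inv_mul_cancel₀ hr0.ne']
        have hpv : gauge C v = 1 := by
          rw [hv, gauge_smul_of_nonneg (inv_nonneg.2 hr0.le), smul_eq_mul, ← hne,
            inv_mul_cancel₀ hr0.ne']
        set w := a • u + b • v with hw
        have hweq : w = (gauge C x)⁻¹ • (a • x + b • y) := by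
          rw [hw, hu, hv, smul_add, smul_comm, smul_comm (gauge C x)⁻¹ b]
        have hpw : gauge C w = 1 := by
          rw [hweq, gauge_smul_of_nonneg (inv_nonneg.2 hr0.le), smul_eq_mul, h,
            inv_mul_cancel₀ hr0.ne']
        have hwfront : w + z ∈ frontier B := by
          have hmem : w ∈ frontier C := (gauge_eq_one_iff_mem_frontier hCconv hC0).1 hpw
          rw [hfrontier] at hmem; exact hmem
        have huB : u + z ∈ B := by
          have hmem : u ∈ closure C := (gauge_le_one_iff_mem_closure hCconv hC0).1 hpu.le
          rwa [hCclosed.closure_eq] at hmem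
        have hvB : v + z ∈ B := by
          have hmem : v ∈ closure C := (gauge_le_one_iff_mem_closure hCconv hC0).1 hpv.le
          rwa [hCclosed.closure_eq] at hmem
        have hseg : w + z ∈ openSegment ℝ (u + z) (v + z) := by
          refine ⟨a, b, ha, hb, hab, ?_⟩
          rw [smul_add, smul_add, hw]
          have hzz : a • z + b • z = z := by rw [← add_smul, hab, one_smul]
          conv_rhs => rw [← hzz]
          abel
        obtain ⟨h1, h2⟩ := (mem_extremePoints.1 (hext _ hwfront)).2 _ huB _ hvB hseg
        have huv : u = v := add_right_cancel (h1.trans h2.symm)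
        have hxyeq : x = y := by
          have hcast := congrArg (fun t => gauge C x • t) huv
          simpa [hu, hv, smul_smul, mul_inv_cancel₀ hr0.ne'] using hcast
        exact hxy hxyeq
    calc gauge C (a • x + b • y) ^ 2 / 2 < gauge C x ^ 2 / 2 := by
          nlinarith [gauge_nonneg (s := C) (a • x + b • y)]
    _ = a * (gauge C x ^ 2 / 2) + b * (gauge C y ^ 2 / 2) := by
          rw [← hne]; linear_combination (-(gauge C x ^ 2 / 2)) * hab
  · -- distinct gauges case
    have h1 : gauge C (a • x + b • y) ^ 2 ≤ (a * gauge C x + b * gauge C y) ^ 2 :=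
      pow_le_pow_left₀ (gauge_nonneg _) key 2
    have h2 : (a * gauge C x + b * gauge C y) ^ 2 < a * gauge C x ^ 2 + b * gauge C y ^ 2 := by
      have hsq : (0:ℝ) < (gauge C x - gauge C y) ^ 2 := by
        have hd : gauge C x - gauge C y ≠ 0 := sub_ne_zero.2 hne
        positivity
      nlinarith [mul_pos ha hb]
    linarith

/-- Reverse direction: strict convexity of `gauge²/2` for some `z` implies strict convexity
of the body. -/
lemma gauge_to_strict_body (hBbd : Bornology.IsBounded B) (hBclosed : IsClosed B)
    (hBconv : Convex ℝ B) (hz : z ∈ interior B)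
    (hf : StrictConvexOn ℝ univ (fun x => gauge ((fun b => b - z) '' B) x ^ 2 / 2)) :
    ∀ x ∈ frontier B, x ∈ Set.extremePoints ℝ B := by
  rw [gauge_sq_aux_image_eq] at hf
  set C := (fun x : X => x + z) ⁻¹' B with hCdef
  obtain ⟨hCconv, hC0, hCclosed, hCbd⟩ := gauge_sq_aux_facts hBbd hBclosed hBconv hz
  have hfrontier : frontier C = (fun x : X => x + z) ⁻¹' frontier B := by
    have : C = (Homeomorph.addRight z) ⁻¹' B := rfl
    rw [this, ← (Homeomorph.addRight z).preimage_frontier]; rfl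
  intro x hx
  have hxB : x ∈ B := hBclosed.closure_eq ▸ frontier_subset_closure hx
  refine ⟨hxB, ?_⟩
  intro x₁ h₁ x₂ h₂ hseg
  by_cases heq : x₁ = x₂
  · subst heq
    rw [openSegment_same] at hseg
    exact hseg.symm
  · exfalso
    obtain ⟨a, b, ha, hb, hab, hsum⟩ := hseg
    have hxC : x - z ∈ frontier C := by
      rw [hfrontier]; simpa using hx
    have hgx : gauge C (x - z) = 1 := (gauge_eq_one_iff_mem_frontier hCconv hC0).2 hxC
    have hmem₁ : x₁ - z ∈ C := by simpa [hCdef] using h₁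
    have hmem₂ : x₂ - z ∈ C := by simpa [hCdef] using h₂
    have hg₁ : gauge C (x₁ - z) ≤ 1 := gauge_le_one_of_mem hmem₁
    have hg₂ : gauge C (x₂ - z) ≤ 1 := gauge_le_one_of_mem hmem₂
    have hne : x₁ - z ≠ x₂ - z := fun h => heq (by
      have := congrArg (fun t => t + z) h; simpa using this)
    have hcomb : a • (x₁ - z) + b • (x₂ - z) = x - z := by
      rw [smul_sub, smul_sub]
      have hzz : a • z + b • z = z := by rw [← add_smul, hab, one_smul]
      rw [← hsum]
      conv_lhs => rw [show a • x₁ - a • z + (b • x₂ - b • z)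
        = a • x₁ + b • x₂ - (a • z + b • z) from by abel, hzz]
    have hstrict := hf.2 (mem_univ (x₁ - z)) (mem_univ (x₂ - z)) hne ha hb hab
    rw [hcomb] at hstrict
    simp only [smul_eq_mul, hgx] at hstrict
    have hb1 : gauge C (x₁ - z) ^ 2 / 2 ≤ 1 / 2 := by nlinarith [gauge_nonneg (s := C) (x₁ - z)]
    have hb2 : gauge C (x₂ - z) ^ 2 / 2 ≤ 1 / 2 := by nlinarith [gauge_nonneg (s := C) (x₂ - z)]
    nlinarith [mul_le_mul_of_nonneg_left hb1 ha.le, mul_le_mul_of_nonneg_left hb2 hb.le]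

end main

/-- A convex body `B` in a Banach space `X` is strictly convex
(every boundary point is an extreme point) iff for every `z ∈ interior B` the function
`(1/2)·(gauge of B - z)²` is strictly convex, and iff there exists some `z ∈ interior B`
for which this function is strictly convex. -/
theorem strictly_convex_body_iff_gauge_sq_strictly_convex
    {X : Type*} [NormedAddCommGroup X] [NormedSpace ℝ X] [CompleteSpace X]
    (B : Set X) (hBbd : Bornology.IsBounded B) (hBclosed : IsClosed B)
    (hBconv : Convex ℝ B) (hBint : (interior B).Nonempty) :
    ((∀ x ∈ frontier B, x ∈ Set.extremePoints ℝ B) ↔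
      ∀ z ∈ interior B,
        StrictConvexOn ℝ univ (fun x => gauge ((fun b => b - z) '' B) x ^ 2 / 2)) ∧
    ((∀ x ∈ frontier B, x ∈ Set.extremePoints ℝ B) ↔
      ∃ z ∈ interior B,
        StrictConvexOn ℝ univ (fun x => gauge ((fun b => b - z) '' B) x ^ 2 / 2)) := by
  obtain ⟨z₀, hz₀⟩ := hBint
  constructor
  · constructor
    · intro hext z hz
      exact strict_body_to_gauge hBbd hBclosed hBconv hext hz
    · intro h
      exact gauge_to_strict_body hBbd hBclosed hBconv hz₀ (h z₀ hz₀)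
  · constructor
    · intro hext
      exact ⟨z₀, hz₀, strict_body_to_gauge hBbd hBclosed hBconv hext hz₀⟩
    · rintro ⟨z, hz, hf⟩
      exact gauge_to_strict_body hBbd hBclosed hBconv hz hf
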